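/- Let n ≥ 1 and 0 < λ ≤ Λ. For every real 2n×2n matrix A with λ ≤ det A ≤ Λ, one has |1 − det A| ≤ (2n)^{8n} (1 + Λ)^{2n−1} |Aᵀ J A − J|, where |·| is the Frobenius norm. -/
import Mathlib


open Matrix

noncomputable section

/-- Frobenius norm of a real square matrix. -/
def frob {ι : Type*} [Fintype ι] (A : Matrix ι ι ℝ) : ℝ :=
  Real.sqrt (∑ i, ∑ j, (A i j) ^ 2)

lemma frob_nonneg {ι : Type*} [Fintype ι] (A : Matrix ι ι ℝ) : 0 ≤ frob A :=
  Real.sqrt_nonneg _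

lemma abs_entry_le_frob {ι : Type*} [Fintype ι] (A : Matrix ι ι ℝ) (i j : ι) :
    |A i j| ≤ frob A := by
  rw [← Real.sqrt_sq_eq_abs]
  apply Real.sqrt_le_sqrt
  calc (A i j) ^ 2 ≤ ∑ k, (A i k) ^ 2 :=
        Finset.single_le_sum (f := fun k => (A i k) ^ 2) (fun k _ => sq_nonneg _) (Finset.mem_univ j)
    _ ≤ ∑ l, ∑ k, (A l k) ^ 2 :=
        Finset.single_le_sum (f := fun l => ∑ k, (A l k) ^ 2)
          (fun l _ => Finset.sum_nonneg fun k _ => sq_nonneg _) (Finset.mem_univ i)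

lemma prod_sub_prod_bound {ι : Type*} [DecidableEq ι] (s : Finset ι) (a b : ι → ℝ)
    (C ε : ℝ) (hC : 1 ≤ C) (hε : 0 ≤ ε)
    (ha : ∀ i ∈ s, |a i| ≤ C) (hb : ∀ i ∈ s, |b i| ≤ C)
    (hab : ∀ i ∈ s, |a i - b i| ≤ ε) :
    |∏ i ∈ s, a i - ∏ i ∈ s, b i| ≤ s.card * C ^ s.card * ε := by
  induction s using Finset.induction with
  | empty => simp
  | @insert x t hx ih =>
      have hC0 : (0:ℝ) ≤ C := le_trans zero_le_one hC
      have ha' : ∀ i ∈ t, |a i| ≤ C := fun i hi => ha i (Finset.mem_insert_of_mem hi)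
      have hb' : ∀ i ∈ t, |b i| ≤ C := fun i hi => hb i (Finset.mem_insert_of_mem hi)
      have hab' : ∀ i ∈ t, |a i - b i| ≤ ε := fun i hi => hab i (Finset.mem_insert_of_mem hi)
      have hIH := ih ha' hb' hab'
      have hax : |a x| ≤ C := ha x (Finset.mem_insert_self x t)
      have hbx : |b x| ≤ C := hb x (Finset.mem_insert_self x t)
      have habx : |a x - b x| ≤ ε := hab x (Finset.mem_insert_self x t)
      rw [Finset.prod_insert hx, Finset.prod_insert hx, Finset.card_insert_of_notMem hx]
      have hprod : |∏ i ∈ t, a i| ≤ C ^ t.card := by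
        rw [Finset.abs_prod]
        calc ∏ i ∈ t, |a i| ≤ ∏ i ∈ t, C :=
              Finset.prod_le_prod (fun i _ => abs_nonneg _) (fun i hi => ha' i hi)
          _ = C ^ t.card := Finset.prod_const C
      have key : a x * ∏ i ∈ t, a i - b x * ∏ i ∈ t, b i
          = (a x - b x) * ∏ i ∈ t, a i + b x * (∏ i ∈ t, a i - ∏ i ∈ t, b i) := by ring
      rw [key]
      have h1 : |(a x - b x) * ∏ i ∈ t, a i| ≤ ε * C ^ t.card := by
        rw [abs_mul]
        exact mul_le_mul habx hprod (abs_nonneg _) hε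
      have h2 : |b x * (∏ i ∈ t, a i - ∏ i ∈ t, b i)| ≤ C * (t.card * C ^ t.card * ε) := by
        rw [abs_mul]
        exact mul_le_mul hbx hIH (abs_nonneg _) hC0
      have h3 := abs_add_le ((a x - b x) * ∏ i ∈ t, a i) (b x * (∏ i ∈ t, a i - ∏ i ∈ t, b i))
      have hpow : C ^ t.card ≤ C ^ (t.card + 1) := pow_le_pow_right₀ hC (Nat.le_succ _)
      have hpows : C ^ (t.card + 1) = C * C ^ t.card := by ring
      have hpnn : (0:ℝ) ≤ C ^ t.card := pow_nonneg hC0 _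
      have hm : (0:ℝ) ≤ (t.card : ℝ) := Nat.cast_nonneg _
      push_cast
      rw [hpows]
      nlinarith [mul_nonneg hε hpnn, mul_nonneg (mul_nonneg hm hpnn) hε,
        mul_nonneg (mul_nonneg hε hpnn) (sub_nonneg.mpr hC),
        mul_nonneg (mul_nonneg (mul_nonneg hm hpnn) hε) (sub_nonneg.mpr hC)]

lemma det_sub_det_bound {ι : Type*} [Fintype ι] [DecidableEq ι]
    (M N : Matrix ι ι ℝ) (C ε : ℝ) (hC : 1 ≤ C) (hε : 0 ≤ ε)
    (hM : ∀ i j, |M i j| ≤ C) (hN : ∀ i j, |N i j| ≤ C)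
    (hMN : ∀ i j, |M i j - N i j| ≤ ε) :
    |M.det - N.det| ≤ (Fintype.card ι).factorial * ((Fintype.card ι) * C ^ (Fintype.card ι) * ε) := by
  rw [Matrix.det_apply', Matrix.det_apply', ← Finset.sum_sub_distrib]
  refine le_trans (Finset.abs_sum_le_sum_abs _ _) ?_
  have hterm : ∀ σ : Equiv.Perm ι,
      |((Equiv.Perm.sign σ : ℤ) : ℝ) * ∏ i, M (σ i) i
        - ((Equiv.Perm.sign σ : ℤ) : ℝ) * ∏ i, N (σ i) i|
      ≤ (Fintype.card ι) * C ^ (Fintype.card ι) * ε := by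
    intro σ
    rw [← mul_sub, abs_mul]
    have hsign : |((Equiv.Perm.sign σ : ℤ) : ℝ)| = 1 := by
      rcases Int.units_eq_one_or (Equiv.Perm.sign σ) with h | h <;> rw [h] <;> norm_num
    rw [hsign, one_mul]
    have := prod_sub_prod_bound (Finset.univ : Finset ι) (fun i => M (σ i) i)
      (fun i => N (σ i) i) C ε hC hε (fun i _ => hM _ _) (fun i _ => hN _ _)
      (fun i _ => hMN _ _)
    simpa [Finset.card_univ] using this
  calc ∑ σ : Equiv.Perm ι, |((Equiv.Perm.sign σ : ℤ) : ℝ) * ∏ i, M (σ i) i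
        - ((Equiv.Perm.sign σ : ℤ) : ℝ) * ∏ i, N (σ i) i|
      ≤ ∑ _σ : Equiv.Perm ι, (Fintype.card ι) * C ^ (Fintype.card ι) * ε :=
        Finset.sum_le_sum (fun σ _ => hterm σ)
    _ = (Fintype.card ι).factorial * ((Fintype.card ι) * C ^ (Fintype.card ι) * ε) := by
        rw [Finset.sum_const, Finset.card_univ, Fintype.card_perm, nsmul_eq_mul]

lemma abs_J_entry_le_one (n : ℕ) (i j : Fin n ⊕ Fin n) :
    |Matrix.J (Fin n) ℝ i j| ≤ 1 := by
  rcases i with i | i <;> rcases j with j | j <;>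
    simp [Matrix.J, Matrix.fromBlocks, Matrix.one_apply] <;> split <;> norm_num

theorem stmt_16 (n : ℕ) (hn : 1 ≤ n) (lam Lam : ℝ) (hlam : 0 < lam) (hlL : lam ≤ Lam)
    (A : Matrix (Fin n ⊕ Fin n) (Fin n ⊕ Fin n) ℝ)
    (h1 : lam ≤ A.det) (h2 : A.det ≤ Lam) :
    |1 - A.det| ≤ (2 * (n : ℝ)) ^ (8 * n) * (1 + Lam) ^ (2 * n - 1) *
      frob (Aᵀ * Matrix.J (Fin n) ℝ * A - Matrix.J (Fin n) ℝ) := by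
  set Jm := Matrix.J (Fin n) ℝ with hJm
  set E := Aᵀ * Jm * A - Jm with hE
  set f := frob E with hf
  have hf0 : 0 ≤ f := frob_nonneg E
  have hd : 0 < A.det := lt_of_lt_of_le hlam h1
  have hLam : 0 < Lam := lt_of_lt_of_le hlam hlL
  have hLam1 : 1 ≤ 1 + Lam := by linarith
  have h2n1 : 1 ≤ 2 * n - 1 := by omega
  have hbase : (2:ℝ) ≤ 2 * n := by
    have : (1:ℝ) ≤ n := by exact_mod_cast hn
    linarith
  have hpow1 : (1:ℝ) ≤ (2 * (n : ℝ)) ^ (8 * n) :=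
    one_le_pow₀ (by linarith)
  have hL1 : (1:ℝ) ≤ (1 + Lam) ^ (2 * n - 1) := one_le_pow₀ hLam1
  have hLpow : (1 + Lam) ≤ (1 + Lam) ^ (2 * n - 1) :=
    le_self_pow₀ hLam1 (by omega)
  have hA0 : (0:ℝ) ≤ (2 * (n : ℝ)) ^ (8 * n) := by positivity
  rcases le_or_gt 1 f with hcase | hcase
  · -- easy case : f ≥ 1
    calc |1 - A.det| ≤ 1 + Lam := abs_le.mpr ⟨by linarith, by linarith⟩
      _ = 1 * (1 + Lam) * 1 := by ring
      _ ≤ (2 * (n : ℝ)) ^ (8 * n) * (1 + Lam) ^ (2 * n - 1) * f := by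
          apply mul_le_mul _ hcase zero_le_one
          · exact mul_nonneg hA0 (by linarith)
          · exact mul_le_mul hpow1 hLpow (by linarith) hA0
  · -- main case : f < 1
    have hK : Fintype.card (Fin n ⊕ Fin n) = 2 * n := by
      simp [Fintype.card_sum]; ring
    -- entrywise bounds
    have hEentry : ∀ i j, |(Aᵀ * Jm * A) i j - Jm i j| ≤ f := by
      intro i j
      have : (Aᵀ * Jm * A) i j - Jm i j = E i j := by
        rw [hE, Matrix.sub_apply]
      rw [this]
      exact abs_entry_le_frob E i j
    have hJentry : ∀ i j, |Jm i j| ≤ (2:ℝ) := fun i j =>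
      le_trans (abs_J_entry_le_one n i j) (by norm_num)
    have hMentry : ∀ i j, |(Aᵀ * Jm * A) i j| ≤ (2:ℝ) := by
      intro i j
      have h' := hEentry i j
      have h'' := abs_J_entry_le_one n i j
      have := abs_sub_abs_le_abs_sub ((Aᵀ * Jm * A) i j) (Jm i j)
      have habs := abs_abs_sub_abs_le_abs_sub ((Aᵀ * Jm * A) i j) (Jm i j)
      nlinarith [abs_nonneg ((Aᵀ * Jm * A) i j)]
    have hbound := det_sub_det_bound (Aᵀ * Jm * A) Jm 2 f (by norm_num) hf0
      hMentry hJentry hEentry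
    simp only [hK] at hbound
    -- determinant computation
    have hdetJ : (Jm.det) * (Jm.det) = 1 := Matrix.J_det_mul_J_det (Fin n) ℝ
    have hcabs : |Jm.det| = 1 := by
      rcases mul_self_eq_one_iff.mp hdetJ with h | h <;> rw [h] <;> norm_num
    have hdetM : (Aᵀ * Jm * A).det = A.det ^ 2 * Jm.det := by
      rw [Matrix.det_mul, Matrix.det_mul, Matrix.det_transpose]; ring
    have hsq : |A.det ^ 2 - 1| ≤ ((2*n).factorial : ℝ) * ((2*n : ℕ) * 2 ^ (2*n) * f) := by
      have : (Aᵀ * Jm * A).det - Jm.det = Jm.det * (A.det ^ 2 - 1) := by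
        rw [hdetM]; ring
      rw [this, abs_mul, hcabs, one_mul] at hbound
      exact_mod_cast hbound
    have hstep1 : |1 - A.det| ≤ |A.det ^ 2 - 1| := by
      have e : A.det ^ 2 - 1 = (A.det - 1) * (A.det + 1) := by ring
      rw [e, abs_mul, abs_of_pos (show (0:ℝ) < A.det + 1 by linarith), abs_sub_comm]
      nlinarith [abs_nonneg (A.det - 1)]
    -- numeric constant comparison
    have hnat : (2*n).factorial * (2*n * 2^(2*n)) ≤ (2*n)^(8*n) := by
      calc (2*n).factorial * (2*n * 2^(2*n))
          ≤ (2*n)^(2*n) * ((2*n)^(2*n) * (2*n)^(2*n)) :=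
            Nat.mul_le_mul (Nat.factorial_le_pow _)
              (Nat.mul_le_mul (Nat.le_self_pow (by omega) _)
                (Nat.pow_le_pow_left (by omega) _))
        _ = (2*n)^(2*n + (2*n + 2*n)) := by rw [pow_add, pow_add]
        _ ≤ (2*n)^(8*n) := Nat.pow_le_pow_right (by omega) (by omega)
    have hconstR : ((2*n).factorial : ℝ) * ((2*n : ℕ) * 2^(2*n)) ≤ (2 * (n:ℝ))^(8*n) := by
      have : ((2*n).factorial * (2*n * 2^(2*n)) : ℕ) ≤ ((2*n)^(8*n) : ℕ) := hnat
      calc ((2*n).factorial : ℝ) * ((2*n : ℕ) * 2^(2*n))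
          = (((2*n).factorial * (2*n * 2^(2*n)) : ℕ) : ℝ) := by push_cast; ring
        _ ≤ (((2*n)^(8*n) : ℕ) : ℝ) := by exact_mod_cast this
        _ = (2 * (n:ℝ))^(8*n) := by push_cast; ring
    have hcnn : (0:ℝ) ≤ ((2*n).factorial : ℝ) * ((2*n : ℕ) * 2^(2*n)) := by positivity
    calc |1 - A.det| ≤ |A.det ^ 2 - 1| := hstep1
      _ ≤ ((2*n).factorial : ℝ) * ((2*n : ℕ) * 2 ^ (2*n) * f) := hsq
      _ = (((2*n).factorial : ℝ) * ((2*n : ℕ) * 2 ^ (2*n))) * f := by ring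
      _ ≤ ((2 * (n:ℝ))^(8*n) * (1 + Lam) ^ (2*n - 1)) * f := by
          apply mul_le_mul_of_nonneg_right _ hf0
          calc (((2*n).factorial : ℝ) * ((2*n : ℕ) * 2 ^ (2*n)))
              = (((2*n).factorial : ℝ) * ((2*n : ℕ) * 2 ^ (2*n))) * 1 := by ring
            _ ≤ (2 * (n:ℝ))^(8*n) * (1 + Lam) ^ (2*n - 1) :=
                mul_le_mul hconstR hL1 zero_le_one hA0
      _ = (2 * (n:ℝ))^(8*n) * (1 + Lam) ^ (2*n - 1) * f := by ring

end
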